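/- For 4/3 < p < 2, define F_p(s,x) = C_p ∫_0^∞ ((s − x^{2p−2}v)_+)^{p/(2(p−1))} v^{(p−2)/(2(p−1))} φ((p−1)²v) dv for s, x ≥ 0, with C_p and φ as above. Then for every fixed x ≥ 0, lim_{s→∞} F_p(s,x)/s^{p/(2(p−1))} = (2^{(3p−2)/(2(p−1))}(p−1)^{(2−p)/(p−1)}/(√π p(2−p))) Γ(1/(2(p−1))). -/

import Mathlib

open MeasureTheory Real Filter

/-- `φ(v) = ∫_0^∞ λ e^{−λ} e^{−vλ²/2} dλ`. -/
noncomputable def phiFun (v : ℝ) : ℝ :=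
  ∫ l in Set.Ioi (0 : ℝ), l * Real.exp (-l) * Real.exp (-(v / 2) * l ^ 2)

/-- The constant `C_p`. -/
noncomputable def Cp (p : ℝ) : ℝ :=
  (4 * (p - 1) ^ 2 / (π * p * (2 - p))) * Real.sin ((π / 2) * ((2 - p) / (p - 1)))

/-- The function `F_p(s,x)`. -/
noncomputable def Fp (p s x : ℝ) : ℝ :=
  Cp p * ∫ v in Set.Ioi (0 : ℝ),
    (max (s - x ^ (2 * p - 2) * v) 0) ^ (p / (2 * (p - 1))) *
      v ^ ((p - 2) / (2 * (p - 1))) * phiFun ((p - 1) ^ 2 * v)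

open Set Topology

lemma integrableOn_rpow_mul_exp {b t : ℝ} (hb : -1 < b) (ht : 0 < t) :
    IntegrableOn (fun v => v ^ b * Real.exp (-(t * v))) (Set.Ioi (0:ℝ)) := by
  have h0 : IntegrableOn (fun u => Real.exp (-u) * u ^ b) (Set.Ioi (0:ℝ)) := by
    simpa using Real.GammaIntegral_convergent (s := b + 1) (by linarith)
  have h1 : IntegrableOn (fun v => Real.exp (-(t * v)) * (t * v) ^ b) (Set.Ioi (0:ℝ)) := by
    have := (integrableOn_Ioi_comp_mul_left_iff (fun u => Real.exp (-u) * u ^ b) 0 ht).2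
      (by simpa using h0)
    simpa using this
  have h2 : IntegrableOn (fun v => t ^ (-b) * (Real.exp (-(t * v)) * (t * v) ^ b))
      (Set.Ioi (0:ℝ)) := h1.const_mul (t ^ (-b))
  refine h2.congr_fun (fun v hv => ?_) measurableSet_Ioi
  have hv0 : (0:ℝ) < v := hv
  dsimp only; rw [Real.mul_rpow ht.le hv0.le]
  have h3 : t ^ (-b) * t ^ b = 1 := by rw [← Real.rpow_add ht]; simp
  show t ^ (-b) * (Real.exp (-(t * v)) * (t ^ b * v ^ b)) = v ^ b * Real.exp (-(t * v))
  linear_combination (Real.exp (-(t * v)) * v ^ b) * h3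

lemma integral_rpow_mul_exp {b t : ℝ} (hb : -1 < b) (ht : 0 < t) :
    ∫ v in Set.Ioi (0:ℝ), v ^ b * Real.exp (-(t * v)) = (1/t) ^ (b+1) * Real.Gamma (b+1) := by
  simpa using Real.integral_rpow_mul_exp_neg_mul_Ioi (a := b+1) (r := t) (by linarith) ht


lemma phiFun_nonneg (w : ℝ) : 0 ≤ phiFun w :=
  setIntegral_nonneg measurableSet_Ioi fun l hl => by
    have : (0:ℝ) < l := hl
    positivity


section

variable {c b : ℝ}

lemma F_inner_eq (hb1 : -1 < b) (hc : 0 < c) {l : ℝ} (hl : 0 < l) :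
    ∫ v in Set.Ioi (0:ℝ), l * Real.exp (-l) * (v ^ b * Real.exp (-(c/2*l^2) * v))
      = ((2/c) ^ (b+1) * Real.Gamma (b+1)) * (Real.exp (-l) * l ^ (-(2*b)-1)) := by
  have ht : 0 < c/2*l^2 := by positivity
  simp only [neg_mul]
  rw [integral_const_mul, integral_rpow_mul_exp hb1 ht]
  have e0 : (1/(c/2*l^2)) = (2/c) * l ^ ((-2):ℝ) := by
    rw [Real.rpow_neg hl.le, show ((2:ℝ):ℝ) = ((2:ℕ):ℝ) by norm_num, Real.rpow_natCast]
    field_simp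
  have e1 : (1/(c/2*l^2)) ^ (b+1) = (2/c)^(b+1) * l ^ (-2*(b+1)) := by
    rw [e0, Real.mul_rpow (by positivity) (by positivity),
      show (-2*(b+1) : ℝ) = (-2) * (b+1) by ring, Real.rpow_mul hl.le]
  have e2 : l ^ ((-(2*b)-1):ℝ) = l * l ^ ((-2*(b+1)):ℝ) := by
    rw [show (-(2*b)-1:ℝ) = 1 + (-2*(b+1)) by ring, Real.rpow_add hl, Real.rpow_one]
  rw [e1, e2]; ring

lemma prod_integrable (hb1 : -1 < b) (hb0 : b < 0) (hc : 0 < c) :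
    Integrable (fun z : ℝ × ℝ => z.1 * Real.exp (-z.1) * (z.2 ^ b * Real.exp (-(c/2*z.1^2) * z.2)))
      ((volume.restrict (Set.Ioi (0:ℝ))).prod (volume.restrict (Set.Ioi (0:ℝ)))) := by
  have hmeas : Measurable (fun z : ℝ × ℝ =>
      z.1 * Real.exp (-z.1) * (z.2 ^ b * Real.exp (-(c/2*z.1^2) * z.2))) := by
    fun_prop
  rw [integrable_prod_iff hmeas.aestronglyMeasurable]
  constructor
  · filter_upwards [self_mem_ae_restrict measurableSet_Ioi] with l hl
    have hl0 : (0:ℝ) < l := hl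
    have ht : 0 < c/2*l^2 := by positivity
    have h4 := (integrableOn_rpow_mul_exp hb1 ht).const_mul (l * Real.exp (-l))
    refine h4.congr ?_
    refine Filter.Eventually.of_forall fun v => ?_
    show l * Real.exp (-l) * (v ^ b * Real.exp (-(c/2*l^2 * v)))
        = l * Real.exp (-l) * (v ^ b * Real.exp (-(c/2*l^2) * v))
    rw [neg_mul]
  · have hK : IntegrableOn (fun l : ℝ =>
        ((2/c) ^ (b+1) * Real.Gamma (b+1)) * (Real.exp (-l) * l ^ (-(2*b)-1)))
        (Set.Ioi (0:ℝ)) := by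
      have h := Real.GammaIntegral_convergent (s := -(2*b)) (by linarith)
      have h2 := h.const_mul ((2/c) ^ (b+1) * Real.Gamma (b+1))
      refine h2.congr ?_
      refine Filter.Eventually.of_forall fun l => ?_
      norm_num
    refine hK.congr ?_
    filter_upwards [self_mem_ae_restrict measurableSet_Ioi] with l hl
    have hl0 : (0:ℝ) < l := hl
    rw [← F_inner_eq hb1 hc hl0]
    refine setIntegral_congr_fun measurableSet_Ioi fun v hv => ?_
    have hv0 : (0:ℝ) < v := hv
    rw [Real.norm_eq_abs, abs_of_nonneg (by positivity)]

lemma inner_l_eq (v : ℝ) :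
    (∫ l in Set.Ioi (0:ℝ), l * Real.exp (-l) * (v ^ b * Real.exp (-(c/2*l^2) * v)))
      = v ^ b * phiFun (c*v) := by
  rw [phiFun, ← integral_const_mul]
  refine setIntegral_congr_fun measurableSet_Ioi fun l hl => ?_
  rw [show -(c*v/2) * l^2 = -(c/2*l^2) * v by ring]
  ring

lemma key_integrable (hb1 : -1 < b) (hb0 : b < 0) (hc : 0 < c) :
    IntegrableOn (fun v => v ^ b * phiFun (c*v)) (Set.Ioi (0:ℝ)) := by
  have h := (prod_integrable hb1 hb0 hc).integral_prod_right
  refine h.congr (Filter.Eventually.of_forall fun v => ?_)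
  exact inner_l_eq v

lemma key_integral (hb1 : -1 < b) (hb0 : b < 0) (hc : 0 < c) :
    ∫ v in Set.Ioi (0:ℝ), v ^ b * phiFun (c*v)
      = (2/c)^(b+1) * Real.Gamma (b+1) * Real.Gamma (-2*b) := by
  have hswap := integral_integral_swap
    (f := fun l v => l * Real.exp (-l) * (v ^ b * Real.exp (-(c/2*l^2) * v)))
    (prod_integrable hb1 hb0 hc)
  have lhs_eq : (∫ l in Set.Ioi (0:ℝ), ∫ v in Set.Ioi (0:ℝ),
      l * Real.exp (-l) * (v ^ b * Real.exp (-(c/2*l^2) * v)))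
      = (2/c)^(b+1) * Real.Gamma (b+1) * Real.Gamma (-2*b) := by
    rw [show (∫ l in Set.Ioi (0:ℝ), ∫ v in Set.Ioi (0:ℝ),
        l * Real.exp (-l) * (v ^ b * Real.exp (-(c/2*l^2) * v)))
        = ∫ l in Set.Ioi (0:ℝ),
          ((2/c) ^ (b+1) * Real.Gamma (b+1)) * (Real.exp (-l) * l ^ (-(2*b)-1)) from
      setIntegral_congr_fun measurableSet_Ioi fun l hl => F_inner_eq hb1 hc hl]
    rw [integral_const_mul]
    rw [Real.Gamma_eq_integral (show (0:ℝ) < -2*b by linarith)]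
    congr 1
    refine setIntegral_congr_fun measurableSet_Ioi fun l hl => ?_
    congr 1
    · congr 1
      ring

  rw [← lhs_eq, hswap]
  exact setIntegral_congr_fun measurableSet_Ioi fun v _ => (inner_l_eq (c := c) (b := b) v).symm

end

lemma const_algebra (p : ℝ) (hp1 : 4 / 3 < p) (hp2 : p < 2) :
    Cp p * ((2/((p-1)^2)) ^ ((p-2)/(2*(p-1)) + 1) * Real.Gamma ((p-2)/(2*(p-1)) + 1) *
        Real.Gamma (-2 * ((p-2)/(2*(p-1)))))
      = 2 ^ ((3*p-2)/(2*(p-1))) * (p-1) ^ ((2-p)/(p-1)) / (Real.sqrt π * p * (2-p)) *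
        Real.Gamma (1/(2*(p-1))) := by
  have hp0 : (0:ℝ) < p - 1 := by linarith
  have hp2' : (0:ℝ) < 2 - p := by linarith
  have hpp : (0:ℝ) < p := by linarith
  rw [Cp]
  set q : ℝ := (2-p)/(p-1) with hq
  have hq0 : 0 < q := by positivity
  have hq2 : q < 2 := by rw [hq, div_lt_iff₀ hp0]; linarith
  have e1 : (p-2)/(2*(p-1)) + 1 = 1 - q/2 := by rw [hq]; field_simp; ring
  have e2 : -2 * ((p-2)/(2*(p-1))) = q := by rw [hq]; field_simp; ring
  have e3 : (3*p-2)/(2*(p-1)) = 2 + q/2 := by rw [hq]; field_simp; ring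
  have e4 : 1/(2*(p-1)) = (q+1)/2 := by rw [hq]; field_simp; ring
  have e5 : (π/2) * ((2-p)/(p-1)) = π * (q/2) := by rw [hq]; ring
  rw [e1, e2, e3, e4, e5]
  have hS : 0 < Real.sin (π * (q/2)) := by
    apply Real.sin_pos_of_pos_of_lt_pi
    · positivity
    · nlinarith [Real.pi_pos]
  have refl := Real.Gamma_mul_Gamma_one_sub (q/2)
  have dup := Real.Gamma_mul_Gamma_add_half (q/2)
  rw [show 2 * (q/2) = q by ring, show q/2 + 1/2 = (q+1)/2 by ring] at dup
  have hA : 0 < Real.Gamma (q/2) := Real.Gamma_pos_of_pos (by positivity)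
  have hD : 0 < Real.Gamma ((q+1)/2) := Real.Gamma_pos_of_pos (by positivity)
  have ht : (0:ℝ) < Real.sqrt π := Real.sqrt_pos.2 Real.pi_pos
  have W3 : Real.sqrt π * Real.sqrt π = π := Real.mul_self_sqrt Real.pi_pos.le
  have P1 : ((2:ℝ)/((p-1)^2)) ^ ((1 - q/2 : ℝ)) = 2 ^ ((1-q/2 : ℝ)) / (p-1) ^ ((2-q:ℝ)) := by
    rw [Real.div_rpow (by norm_num) (by positivity)]
    congr 1
    rw [← Real.rpow_natCast (p-1) 2, ← Real.rpow_mul hp0.le]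
    norm_num
    rw [show (2:ℝ) * (1 - q/2) = 2 - q by ring]
  have P2 : (2:ℝ) ^ ((2 + q/2 : ℝ)) = 4 * 2 ^ ((q/2:ℝ)) := by
    rw [Real.rpow_add two_pos]
    norm_num
  have P3 : ((p-1):ℝ)^(2:ℕ) = (p-1)^((2-q):ℝ) * (p-1)^(q:ℝ) := by
    rw [← Real.rpow_add hp0, ← Real.rpow_natCast (p-1) 2]
    norm_num
  have W4 : (2:ℝ) ^ ((1-q/2:ℝ)) = 2 ^ ((q/2:ℝ)) * 2 ^ ((1-q:ℝ)) := by
    rw [← Real.rpow_add two_pos]; ring_nf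
  have refl' : Real.sin (π * (q/2)) * (Real.Gamma (q/2) * Real.Gamma (1 - q/2)) = π := by
    rw [refl, mul_comm, div_mul_cancel₀ _ hS.ne']
  have hB : Real.Gamma (1 - q/2) = π / (Real.sin (π * (q/2)) * Real.Gamma (q/2)) := by
    rw [eq_div_iff (by positivity)]
    linear_combination refl'
  have h2 : (0:ℝ) < 2 ^ ((1-q:ℝ)) := Real.rpow_pos_of_pos two_pos _
  have h2b : (0:ℝ) < 2 ^ ((q/2:ℝ)) := Real.rpow_pos_of_pos two_pos _
  have hr1 : (0:ℝ) < (p-1) ^ ((2-q):ℝ) := Real.rpow_pos_of_pos hp0 _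
  have hZ : (0:ℝ) < (p-1) ^ ((q:ℝ)) := Real.rpow_pos_of_pos hp0 _
  have hC : Real.Gamma q = Real.Gamma (q/2) * Real.Gamma ((q+1)/2) /
      (2 ^ ((1-q:ℝ)) * Real.sqrt π) := by
    rw [eq_div_iff (by positivity)]
    linear_combination -dup
  rw [P1, P2, hB, hC, W4, P3]
  set S := Real.sin (π * (q/2)) with hSdef
  set A := Real.Gamma (q/2) with hAdef
  set D := Real.Gamma ((q+1)/2) with hDdef
  set E := (2:ℝ) ^ ((q/2:ℝ)) with hEdef
  set F := (2:ℝ) ^ ((1-q:ℝ)) with hFdef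
  set R := ((p-1):ℝ) ^ ((2-q:ℝ)) with hRdef
  set Z := ((p-1):ℝ) ^ ((q:ℝ)) with hZdef
  rw [← W3]
  field_simp

theorem Fp_asymptotics (p : ℝ) (hp1 : 4 / 3 < p) (hp2 : p < 2) (x : ℝ) (hx : 0 ≤ x) :
    Tendsto (fun s => Fp p s x / s ^ (p / (2 * (p - 1)))) atTop
      (nhds ((2 ^ ((3 * p - 2) / (2 * (p - 1))) * (p - 1) ^ ((2 - p) / (p - 1)) /
          (Real.sqrt π * p * (2 - p))) * Real.Gamma (1 / (2 * (p - 1))))) := by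
  have hp0 : (0:ℝ) < p - 1 := by linarith
  have hαpos : 0 < p / (2 * (p - 1)) := by positivity
  have hb1 : (-1:ℝ) < (p - 2) / (2 * (p - 1)) := by
    rw [lt_div_iff₀ (by positivity : (0:ℝ) < 2 * (p - 1))]
    linarith
  have hb0 : (p - 2) / (2 * (p - 1)) < 0 :=
    div_neg_of_neg_of_pos (by linarith) (by positivity)
  have hc : (0:ℝ) < (p - 1) ^ 2 := by positivity
  have ha0 : 0 ≤ x ^ (2 * p - 2) := Real.rpow_nonneg hx _
  have hGint : IntegrableOn
      (fun v => v ^ ((p - 2) / (2 * (p - 1))) * phiFun ((p - 1) ^ 2 * v)) (Set.Ioi (0:ℝ)) :=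
    key_integrable hb1 hb0 hc
  have hdct : Tendsto (fun s => ∫ v in Set.Ioi (0:ℝ),
      (max (s - x ^ (2 * p - 2) * v) 0) ^ (p / (2 * (p - 1))) / s ^ (p / (2 * (p - 1))) *
        (v ^ ((p - 2) / (2 * (p - 1))) * phiFun ((p - 1) ^ 2 * v))) atTop
      (𝓝 (∫ v in Set.Ioi (0:ℝ),
        v ^ ((p - 2) / (2 * (p - 1))) * phiFun ((p - 1) ^ 2 * v))) := by
    refine tendsto_integral_filter_of_dominated_convergence
      (fun v => v ^ ((p - 2) / (2 * (p - 1))) * phiFun ((p - 1) ^ 2 * v)) ?_ ?_ hGint ?_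
    · refine Filter.Eventually.of_forall fun s => ?_
      refine AEStronglyMeasurable.mul ?_ hGint.aestronglyMeasurable
      refine Measurable.aestronglyMeasurable ?_
      fun_prop
    · filter_upwards [eventually_ge_atTop (1:ℝ)] with s hs
      filter_upwards [self_mem_ae_restrict measurableSet_Ioi] with v hv
      have hv0 : (0:ℝ) < v := hv
      have hGv : 0 ≤ v ^ ((p - 2) / (2 * (p - 1))) * phiFun ((p - 1) ^ 2 * v) :=
        mul_nonneg (Real.rpow_nonneg hv0.le _) (phiFun_nonneg _)
      have hs0 : (0:ℝ) < s := lt_of_lt_of_le one_pos hs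
      have hmax0 : 0 ≤ max (s - x ^ (2 * p - 2) * v) 0 := le_max_right _ _
      have h1 : max (s - x ^ (2 * p - 2) * v) 0 ≤ s :=
        max_le (by nlinarith [mul_nonneg ha0 hv0.le]) hs0.le
      have h2 : (max (s - x ^ (2 * p - 2) * v) 0) ^ (p / (2 * (p - 1)))
          ≤ s ^ (p / (2 * (p - 1))) := Real.rpow_le_rpow hmax0 h1 hαpos.le
      have h3 : (max (s - x ^ (2 * p - 2) * v) 0) ^ (p / (2 * (p - 1)))
          / s ^ (p / (2 * (p - 1))) ≤ 1 :=
        (div_le_one (Real.rpow_pos_of_pos hs0 _)).2 h2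
      rw [Real.norm_eq_abs, abs_of_nonneg (mul_nonneg (by positivity) hGv)]
      calc (max (s - x ^ (2 * p - 2) * v) 0) ^ (p / (2 * (p - 1))) / s ^ (p / (2 * (p - 1))) *
            (v ^ ((p - 2) / (2 * (p - 1))) * phiFun ((p - 1) ^ 2 * v))
          ≤ 1 * (v ^ ((p - 2) / (2 * (p - 1))) * phiFun ((p - 1) ^ 2 * v)) :=
            mul_le_mul_of_nonneg_right h3 hGv
        _ = v ^ ((p - 2) / (2 * (p - 1))) * phiFun ((p - 1) ^ 2 * v) := one_mul _
    · filter_upwards [self_mem_ae_restrict measurableSet_Ioi] with v hv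
      have hv0 : (0:ℝ) < v := hv
      have hratio : Tendsto (fun s : ℝ =>
          (max (s - x ^ (2 * p - 2) * v) 0) ^ (p / (2 * (p - 1))) / s ^ (p / (2 * (p - 1))))
          atTop (𝓝 1) := by
        have h0 : Tendsto (fun s : ℝ => x ^ (2 * p - 2) * v / s) atTop (𝓝 0) :=
          Tendsto.div_atTop tendsto_const_nhds tendsto_id
        have h1 : Tendsto (fun s : ℝ => 1 - x ^ (2 * p - 2) * v / s) atTop (𝓝 1) := by
          simpa using (tendsto_const_nhds (x := (1:ℝ)) (f := atTop)).sub h0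
        have hcont : ContinuousAt (fun y : ℝ => y ^ (p / (2 * (p - 1)))) 1 :=
          Real.continuousAt_rpow_const 1 _ (Or.inl one_ne_zero)
        have h2 : Tendsto (fun s : ℝ =>
            (1 - x ^ (2 * p - 2) * v / s) ^ (p / (2 * (p - 1)))) atTop (𝓝 1) := by
          have := hcont.tendsto.comp h1
          simpa [Real.one_rpow, Function.comp_def] using this
        refine h2.congr' ?_
        filter_upwards [eventually_ge_atTop (x ^ (2 * p - 2) * v + 1)] with s hs
        have hav : 0 ≤ x ^ (2 * p - 2) * v := mul_nonneg ha0 hv0.le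
        have hs0 : (0:ℝ) < s := by linarith
        have hsv : 0 ≤ s - x ^ (2 * p - 2) * v := by linarith
        rw [max_eq_left hsv, ← Real.div_rpow hsv hs0.le]
        congr 1
        field_simp
      have := hratio.mul_const (v ^ ((p - 2) / (2 * (p - 1))) * phiFun ((p - 1) ^ 2 * v))
      simpa using this
  have hrepr : (fun s : ℝ => Cp p * ∫ v in Set.Ioi (0:ℝ),
      (max (s - x ^ (2 * p - 2) * v) 0) ^ (p / (2 * (p - 1))) / s ^ (p / (2 * (p - 1))) *
        (v ^ ((p - 2) / (2 * (p - 1))) * phiFun ((p - 1) ^ 2 * v)))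
      =ᶠ[atTop] (fun s => Fp p s x / s ^ (p / (2 * (p - 1)))) := by
    refine Filter.Eventually.of_forall fun s => ?_
    simp only [Fp]
    rw [mul_div_assoc, ← integral_div]
    refine congrArg _ (integral_congr_ae (Filter.Eventually.of_forall fun v => ?_))
    ring
  have hlim := (hdct.const_mul (Cp p)).congr' hrepr
  rw [key_integral hb1 hb0 hc] at hlim
  have halg := const_algebra p hp1 hp2
  rw [halg] at hlim
  exact hlim
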